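/- Let A, B ∈ ℝ^{n×n} with B invertible, and let P ∈ ℝ^{n×n} be symmetric positive definite satisfying (1/2)PBBᵀP − 2B⁻ᵀB⁻¹ + (B⁻¹A)ᵀ(B⁻¹A) = 0. Consider the linear system ẋ = Ax + Bu, y = B⁻¹x with storage function V(x) = (1/2)xᵀPx. Then the negative imaginary dissipation inequality xᵀP(Ax + Bu) ≤ uᵀB⁻¹(Ax + Bu) holds for all x, u ∈ ℝⁿ if and only if the L₂-gain ≤ 1 dissipation inequality xᵀP(Ax + Bu) ≤ uᵀu − xᵀB⁻ᵀB⁻¹x holds for all x, u ∈ ℝⁿ. -/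
import Mathlib

open Matrix

private lemma dot_self_nonneg' {n : ℕ} (v : Fin n → ℝ) : 0 ≤ v ⬝ᵥ v :=
  Finset.sum_nonneg fun i _ => mul_self_nonneg _

/-- Completing the square: `∀ u, p + a⬝u - u⬝u ≤ 0 ↔ p + (a⬝a)/4 ≤ 0`. -/
private lemma quad_max' {n : ℕ} (a : Fin n → ℝ) (p : ℝ) :
    (∀ u : Fin n → ℝ, p + a ⬝ᵥ u - u ⬝ᵥ u ≤ 0) ↔ p + (a ⬝ᵥ a) / 4 ≤ 0 := by
  constructor
  · intro h
    have h2 := h ((1/2 : ℝ) • a)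
    rw [dotProduct_smul, smul_dotProduct, dotProduct_smul] at h2
    simp only [smul_eq_mul] at h2
    linarith
  · intro h u
    have h2 : (0:ℝ) ≤ (u - (1/2:ℝ) • a) ⬝ᵥ (u - (1/2:ℝ) • a) := dot_self_nonneg' _
    have expand : (u - (1/2:ℝ) • a) ⬝ᵥ (u - (1/2:ℝ) • a)
        = u ⬝ᵥ u - a ⬝ᵥ u + (a ⬝ᵥ a) / 4 := by
      simp only [sub_dotProduct, dotProduct_sub, smul_dotProduct, dotProduct_smul,
        dotProduct_comm a u, smul_eq_mul]
      ring
    rw [expand] at h2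
    linarith

/-- For the linear system ẋ = Ax + Bu, y = B⁻¹x with `B`
invertible and `P` symmetric positive definite satisfying
`(1/2)PBBᵀP − 2B⁻ᵀB⁻¹ + (B⁻¹A)ᵀ(B⁻¹A) = 0`, with storage function
`V(x) = (1/2)xᵀPx`, the negative imaginary dissipation inequality
`xᵀP(Ax + Bu) ≤ uᵀB⁻¹(Ax + Bu)` holds for all `x`, `u` iff the L₂-gain ≤ 1
dissipation inequality `xᵀP(Ax + Bu) ≤ uᵀu − xᵀB⁻ᵀB⁻¹x` holds for all `x`, `u`. -/
theorem linear_negativeImaginary_iff_L2gain {n : ℕ}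
    (A B P : Matrix (Fin n) (Fin n) ℝ)
    (hB : IsUnit B.det)
    (hP : P.PosDef)
    (hiden : (1/2 : ℝ) • (P * B * Bᵀ * P) - (2 : ℝ) • (B⁻¹ᵀ * B⁻¹)
        + (B⁻¹ * A)ᵀ * (B⁻¹ * A) = 0) :
    (∀ x u : Fin n → ℝ,
        x ⬝ᵥ (P *ᵥ (A *ᵥ x + B *ᵥ u)) ≤ u ⬝ᵥ (B⁻¹ *ᵥ (A *ᵥ x + B *ᵥ u)))
    ↔ (∀ x u : Fin n → ℝ,
        x ⬝ᵥ (P *ᵥ (A *ᵥ x + B *ᵥ u)) ≤ u ⬝ᵥ u - x ⬝ᵥ ((B⁻¹ᵀ * B⁻¹) *ᵥ x)) := by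
  have hPt : Pᵀ = P := hP.1.eq
  have hBB : B * B⁻¹ = 1 := mul_nonsing_inv B hB
  have hB'B : B⁻¹ * B = 1 := nonsing_inv_mul B hB
  -- abbreviations
  set a : (Fin n → ℝ) → (Fin n → ℝ) := fun x => Bᵀ *ᵥ (P *ᵥ x) with ha
  set b : (Fin n → ℝ) → (Fin n → ℝ) := fun x => B⁻¹ *ᵥ (A *ᵥ x) with hb
  -- basic dot-product rewrites
  have hxPw : ∀ (x w : Fin n → ℝ), x ⬝ᵥ (P *ᵥ w) = (P *ᵥ x) ⬝ᵥ w := by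
    intro x w
    rw [dotProduct_mulVec, ← vecMul_transpose, hPt]
  have hxPBu : ∀ (x u : Fin n → ℝ), x ⬝ᵥ (P *ᵥ (B *ᵥ u)) = a x ⬝ᵥ u := by
    intro x u
    rw [hxPw, dotProduct_mulVec, ← mulVec_transpose]
  have huBBu : ∀ u : Fin n → ℝ, u ⬝ᵥ (B⁻¹ *ᵥ (B *ᵥ u)) = u ⬝ᵥ u := by
    intro u
    rw [mulVec_mulVec, hB'B, one_mulVec]
  have hab : ∀ x : Fin n → ℝ, a x ⬝ᵥ b x = x ⬝ᵥ (P *ᵥ (A *ᵥ x)) := by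
    intro x
    rw [hxPw x (A *ᵥ x), ha, hb]
    rw [dotProduct_comm, dotProduct_mulVec, vecMul_transpose, mulVec_mulVec, hBB,
      one_mulVec, dotProduct_comm]
  -- quadratic form identity from hiden
  have hkey : ∀ x : Fin n → ℝ,
      (1/2 : ℝ) * (a x ⬝ᵥ a x) - 2 * (x ⬝ᵥ ((B⁻¹ᵀ * B⁻¹) *ᵥ x)) + b x ⬝ᵥ b x = 0 := by
    intro x
    have h0 := congrArg (fun M => x ⬝ᵥ (M *ᵥ x)) hiden
    simp only [add_mulVec, sub_mulVec, smul_mulVec, dotProduct_add,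
      dotProduct_sub, dotProduct_smul, smul_eq_mul, zero_mulVec, dotProduct_zero] at h0
    have e1 : x ⬝ᵥ ((P * B * Bᵀ * P) *ᵥ x) = a x ⬝ᵥ a x := by
      have : (P * B * Bᵀ * P) *ᵥ x = P *ᵥ (B *ᵥ (Bᵀ *ᵥ (P *ᵥ x))) := by
        simp [mulVec_mulVec, Matrix.mul_assoc]
      rw [this, hxPBu]
    have e2 : x ⬝ᵥ (((B⁻¹ * A)ᵀ * (B⁻¹ * A)) *ᵥ x) = b x ⬝ᵥ b x := by
      rw [← mulVec_mulVec, dotProduct_mulVec, vecMul_transpose]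
      simp [hb, ← mulVec_mulVec]
    rw [e1, e2] at h0
    linarith
  -- reduce each side via quad_max'
  have hNI : (∀ x u : Fin n → ℝ,
        x ⬝ᵥ (P *ᵥ (A *ᵥ x + B *ᵥ u)) ≤ u ⬝ᵥ (B⁻¹ *ᵥ (A *ᵥ x + B *ᵥ u)))
      ↔ ∀ x : Fin n → ℝ, x ⬝ᵥ (P *ᵥ (A *ᵥ x))
          + ((a x - b x) ⬝ᵥ (a x - b x)) / 4 ≤ 0 := by
    constructor
    · intro h x
      rw [← quad_max']
      intro u
      have h2 := h x u
      rw [mulVec_add, mulVec_add, dotProduct_add, dotProduct_add, hxPBu, huBBu] at h2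
      have h3 : (a x - b x) ⬝ᵥ u = a x ⬝ᵥ u - u ⬝ᵥ b x := by
        rw [sub_dotProduct, dotProduct_comm (b x) u]
      linarith
    · intro h x u
      have h2 := (quad_max' (a x - b x) (x ⬝ᵥ (P *ᵥ (A *ᵥ x)))).2 (h x) u
      rw [mulVec_add, mulVec_add, dotProduct_add, dotProduct_add, hxPBu, huBBu]
      have h3 : (a x - b x) ⬝ᵥ u = a x ⬝ᵥ u - u ⬝ᵥ b x := by
        rw [sub_dotProduct, dotProduct_comm (b x) u]
      linarith
  have hL2 : (∀ x u : Fin n → ℝ,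
        x ⬝ᵥ (P *ᵥ (A *ᵥ x + B *ᵥ u)) ≤ u ⬝ᵥ u - x ⬝ᵥ ((B⁻¹ᵀ * B⁻¹) *ᵥ x))
      ↔ ∀ x : Fin n → ℝ, x ⬝ᵥ (P *ᵥ (A *ᵥ x)) + x ⬝ᵥ ((B⁻¹ᵀ * B⁻¹) *ᵥ x)
          + (a x ⬝ᵥ a x) / 4 ≤ 0 := by
    constructor
    · intro h x
      rw [← quad_max']
      intro u
      have h2 := h x u
      rw [mulVec_add, dotProduct_add, hxPBu] at h2
      linarith
    · intro h x u
      have h2 := (quad_max' (a x)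
        (x ⬝ᵥ (P *ᵥ (A *ᵥ x)) + x ⬝ᵥ ((B⁻¹ᵀ * B⁻¹) *ᵥ x))).2 (h x) u
      rw [mulVec_add, dotProduct_add, hxPBu]
      linarith
  rw [hNI, hL2]
  constructor <;> intro h x <;> have h2 := h x <;> have h3 := hkey x <;>
    have h4 := hab x <;>
    have e : (a x - b x) ⬝ᵥ (a x - b x)
        = a x ⬝ᵥ a x - 2 * (a x ⬝ᵥ b x) + b x ⬝ᵥ b x := by
      rw [sub_dotProduct, dotProduct_sub, dotProduct_sub, dotProduct_comm (b x) (a x)]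
      ring
  · rw [e, h4] at h2; linarith
  · rw [e, h4]; linarith
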